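/- arXiv:1101.3140 — 2 statements merged into one kernel-verified Lean document; each statement's English description precedes it below -/
import Mathlib

section
/- Assume ζ = 0. Let B = (x^{β₁},…,x^{β_μ}) be a monomial basis of R/Q₀, and let {x^{γ₁},…,x^{γ_{s−μ}}} be the remaining monomials x^γ ∉ Q₀ with γ ∈ supp 𝒟₀ and x^γ ∉ B, where s = #supp 𝒟₀. For each j write the normal form x^{γ_j} ≡ Σ_{i=1}^{μ} λ_{ij} x^{β_i} mod Q₀. Then the elements Λ_i = d^{β_i} + Σ_{j=1}^{s−μ} λ_{ij} d^{γ_j}, i = 1,…,μ, form a basis of 𝒟₀, and the normal form of any g ∈ R modulo Q₀ with respect to the basis B is NF(g) = Σ_{i=1}^{μ} Λ_i^0[g] · x^{β_i}. -/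
open MvPolynomial

/-- Total degree of a multi-exponent. -/
def multideg {n : ℕ} (α : Fin n →₀ ℕ) : ℕ := α.sum fun _ k => k

/-- Normalized derivative `d^α g = (1/α!) ∂^α g` as a polynomial. -/
noncomputable def nderiv {n : ℕ} (α : Fin n →₀ ℕ) (g : MvPolynomial (Fin n) ℝ) :
    MvPolynomial (Fin n) ℝ :=
  ∑ γ ∈ g.support,
    monomial (γ - α) (((∏ i, (γ i).choose (α i) : ℕ) : ℝ) * coeff γ g)

/-- `Λ(∂_x)[g]`: apply the differential operator with coefficients `Λ`
(in the normalized basis `d^α`), keeping a polynomial result. -/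
noncomputable def applyPoly {n : ℕ} (Λ : (Fin n →₀ ℕ) →₀ ℝ)
    (g : MvPolynomial (Fin n) ℝ) : MvPolynomial (Fin n) ℝ :=
  Λ.sum fun α c => c • nderiv α g

/-- `Λ ↦ Λ^ζ[g]`, as a linear map in `Λ`. -/
noncomputable def applyAtL {n : ℕ} (ζ : Fin n → ℝ) (g : MvPolynomial (Fin n) ℝ) :
    ((Fin n →₀ ℕ) →₀ ℝ) →ₗ[ℝ] ℝ :=
  Finsupp.linearCombination ℝ (fun α => eval ζ (nderiv α g))

/-- `Λ^ζ[g]`. -/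
noncomputable def applyAt {n : ℕ} (ζ : Fin n → ℝ) (Λ : (Fin n →₀ ℕ) →₀ ℝ)
    (g : MvPolynomial (Fin n) ℝ) : ℝ := applyAtL ζ g Λ

/-- The orthogonal (dual space) of an ideal at ζ. -/
noncomputable def dualSpace {n : ℕ} (ζ : Fin n → ℝ)
    (Q : Ideal (MvPolynomial (Fin n) ℝ)) : Submodule ℝ ((Fin n →₀ ℕ) →₀ ℝ) :=
  ⨅ p ∈ Q, LinearMap.ker (applyAtL ζ p)

/-- The maximal ideal at ζ. -/
noncomputable def maxIdealAt {n : ℕ} (ζ : Fin n → ℝ) : Ideal (MvPolynomial (Fin n) ℝ) :=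
  Ideal.span (Set.range fun i => X i - C (ζ i))

/-- `Q` is the primary component of `I` at an isolated root `ζ`. -/
def IsPrimaryComponentAt {n : ℕ} (ζ : Fin n → ℝ)
    (I Q : Ideal (MvPolynomial (Fin n) ℝ)) : Prop :=
  Q.IsPrimary ∧ Q.radical = maxIdealAt ζ ∧
    ∃ S : Finset (Ideal (MvPolynomial (Fin n) ℝ)),
      (∀ P ∈ S, P.IsPrimary ∧ ¬ P.radical ≤ maxIdealAt ζ) ∧ I = S.inf id ⊓ Q

/-- Elements of the dual space of degree at most `t`. -/
noncomputable def dualSpaceLE {n : ℕ} (ζ : Fin n → ℝ)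
    (Q : Ideal (MvPolynomial (Fin n) ℝ)) (t : ℕ) :
    Submodule ℝ ((Fin n →₀ ℕ) →₀ ℝ) :=
  dualSpace ζ Q ⊓ Finsupp.supported ℝ ℝ {α | multideg α ≤ t}

/-- The derivation `∂/∂∂_i` in the normalized coordinates: shift of coefficients. -/
noncomputable def dshift {n : ℕ} (i : Fin n) (Λ : (Fin n →₀ ℕ) →₀ ℝ) :
    (Fin n →₀ ℕ) →₀ ℝ :=
  Finsupp.comapDomain (fun β => β + Finsupp.single i 1) Λ
    (fun _ _ _ _ h => add_right_cancel h)

/-- Truncation: set `∂_j = 0` for `j > k`. -/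
noncomputable def trunck {n : ℕ} (k : Fin n) (Λ : (Fin n →₀ ℕ) →₀ ℝ) :
    (Fin n →₀ ℕ) →₀ ℝ :=
  Λ.filter (fun α => ∀ j, k < j → α j = 0)

/-- Integration with respect to `∂_k` in the normalized coordinates. -/
noncomputable def intk {n : ℕ} (k : Fin n) (Λ : (Fin n →₀ ℕ) →₀ ℝ) :
    (Fin n →₀ ℕ) →₀ ℝ :=
  Finsupp.mapDomain (fun α => α + Finsupp.single k 1) Λ

/-- `supp 𝒟₀`: the set of exponents `α` such that `d^α` appears with a nonzero
coefficient in some element of the dual space at `0`. -/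
def dsupp {n : ℕ} (Q : Ideal (MvPolynomial (Fin n) ℝ)) : Set (Fin n →₀ ℕ) :=
  {α | ∃ Λ ∈ dualSpace (0 : Fin n → ℝ) Q, Λ α ≠ 0}
section Aux

open MvPolynomial

lemma eval_zero_nderiv {n : ℕ} (α : Fin n →₀ ℕ) (g : MvPolynomial (Fin n) ℝ) :
    eval (0 : Fin n → ℝ) (nderiv α g) = coeff α g := by
  unfold nderiv
  rw [map_sum, Finset.sum_eq_single α]
  · by_cases h : α ∈ g.support
    · simp [eval_monomial, Nat.choose_self]
    · simp [MvPolynomial.notMem_support_iff.mp h]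
  · intro γ hγ hne
    rw [eval_monomial]
    by_cases hle : γ ≤ α
    · have : ∃ i, γ i < α i := by
        by_contra hc
        push_neg at hc
        exact hne (le_antisymm hle (Finsupp.le_def.mpr hc))
      obtain ⟨i, hi⟩ := this
      have : (γ i).choose (α i) = 0 := Nat.choose_eq_zero_of_lt hi
      rw [Finset.prod_eq_zero (Finset.mem_univ i) this]
      simp
    · have h0 : γ - α ≠ 0 := fun h => hle (tsub_eq_zero_iff_le.mp h)
      obtain ⟨i, hi⟩ := Finsupp.ne_iff.mp h0
      have hmem : i ∈ (γ - α).support := Finsupp.mem_support_iff.mpr (by simpa using hi)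
      rw [Finsupp.prod, Finset.prod_eq_zero hmem]
      · ring
      · exact zero_pow (Finsupp.mem_support_iff.mp hmem)
  · intro h
    simp [MvPolynomial.notMem_support_iff.mp h]

lemma applyAt_eq {n : ℕ} (Λ : (Fin n →₀ ℕ) →₀ ℝ) (g : MvPolynomial (Fin n) ℝ) :
    applyAt (0 : Fin n → ℝ) Λ g = ∑ α ∈ Λ.support, Λ α * coeff α g := by
  rw [applyAt, applyAtL, Finsupp.linearCombination_apply, Finsupp.sum]
  exact Finset.sum_congr rfl fun α _ => by rw [eval_zero_nderiv, smul_eq_mul]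

lemma applyAt_monomial {n : ℕ} (Λ : (Fin n →₀ ℕ) →₀ ℝ) (α : Fin n →₀ ℕ) (c : ℝ) :
    applyAt (0 : Fin n → ℝ) Λ (monomial α c) = Λ α * c := by
  rw [applyAt_eq]
  by_cases h : α ∈ Λ.support
  · rw [Finset.sum_eq_single α]
    · simp [coeff_monomial]
    · intro b _ hne
      simp [coeff_monomial, Ne.symm hne]
    · intro h'; exact absurd h h'
  · rw [Finsupp.notMem_support_iff.mp h, zero_mul]
    apply Finset.sum_eq_zero
    intro b hb
    have : α ≠ b := fun e => h (e ▸ hb)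
    simp [coeff_monomial, this]

lemma applyAt_g_add {n : ℕ} (Λ : (Fin n →₀ ℕ) →₀ ℝ) (g h : MvPolynomial (Fin n) ℝ) :
    applyAt (0 : Fin n → ℝ) Λ (g + h)
      = applyAt (0 : Fin n → ℝ) Λ g + applyAt (0 : Fin n → ℝ) Λ h := by
  simp [applyAt_eq, coeff_add, mul_add, Finset.sum_add_distrib]

lemma applyAt_g_smul {n : ℕ} (Λ : (Fin n →₀ ℕ) →₀ ℝ) (c : ℝ) (g : MvPolynomial (Fin n) ℝ) :
    applyAt (0 : Fin n → ℝ) Λ (c • g) = c * applyAt (0 : Fin n → ℝ) Λ g := by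
  simp [applyAt_eq, MvPolynomial.coeff_smul, Finset.mul_sum]
  ring_nf
  exact Finset.sum_congr rfl fun α _ => by ring

lemma applyAt_g_sub {n : ℕ} (Λ : (Fin n →₀ ℕ) →₀ ℝ) (g h : MvPolynomial (Fin n) ℝ) :
    applyAt (0 : Fin n → ℝ) Λ (g - h)
      = applyAt (0 : Fin n → ℝ) Λ g - applyAt (0 : Fin n → ℝ) Λ h := by
  simp [applyAt_eq, coeff_sub, mul_sub, Finset.sum_sub_distrib]

lemma applyAt_g_sum {n : ℕ} (Λ : (Fin n →₀ ℕ) →₀ ℝ) {ι : Type*} (s : Finset ι)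
    (g : ι → MvPolynomial (Fin n) ℝ) :
    applyAt (0 : Fin n → ℝ) Λ (∑ i ∈ s, g i)
      = ∑ i ∈ s, applyAt (0 : Fin n → ℝ) Λ (g i) := by
  classical
  induction s using Finset.induction with
  | empty => simp [applyAt_eq]
  | insert _ _ h ih => rw [Finset.sum_insert h, applyAt_g_add, ih, Finset.sum_insert h]

lemma maxIdealAt_zero {n : ℕ} :
    maxIdealAt (0 : Fin n → ℝ)
      = Ideal.span (Set.range (X : Fin n → MvPolynomial (Fin n) ℝ)) := by
  unfold maxIdealAt
  congr 1
  ext p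
  simp

lemma monomial_mem_pow {n : ℕ} (α : Fin n →₀ ℕ) :
    monomial α (1 : ℝ)
      ∈ (Ideal.span (Set.range (X : Fin n → MvPolynomial (Fin n) ℝ))) ^ (multideg α) := by
  have h1 : (monomial α (1 : ℝ)) = ∏ i : Fin n, (X i) ^ (α i) := by
    rw [monomial_eq, Finsupp.prod_fintype]
    · simp
    · intro i; exact pow_zero _
  have h2 : multideg α = ∑ i : Fin n, α i := by
    rw [multideg, Finsupp.sum_fintype]
    intro i; rfl
  rw [h1, h2]
  induction (Finset.univ : Finset (Fin n)) using Finset.induction with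
  | empty => simp [Ideal.one_eq_top]
  | insert _ _ h ih =>
    rw [Finset.prod_insert h, Finset.sum_insert h, pow_add]
    exact Ideal.mul_mem_mul
      (Ideal.pow_mem_pow (Ideal.subset_span (Set.mem_range_self _)) _) ih

lemma exists_bound {n : ℕ} (Q : Ideal (MvPolynomial (Fin n) ℝ))
    (hr : Q.radical = maxIdealAt (0 : Fin n → ℝ)) :
    ∃ N : ℕ, ∀ α : Fin n →₀ ℕ, N ≤ multideg α → monomial α (1 : ℝ) ∈ Q := by
  obtain ⟨N, hN⟩ := Ideal.exists_radical_pow_le_of_fg Q (IsNoetherian.noetherian _)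
  refine ⟨N, fun α hα => ?_⟩
  apply hN
  rw [hr, maxIdealAt_zero]
  exact Ideal.pow_le_pow_right hα (monomial_mem_pow α)

lemma mem_dualSpace {n : ℕ} {Q : Ideal (MvPolynomial (Fin n) ℝ)} {Λ : (Fin n →₀ ℕ) →₀ ℝ} :
    Λ ∈ dualSpace (0 : Fin n → ℝ) Q ↔ ∀ p ∈ Q, applyAt (0 : Fin n → ℝ) Λ p = 0 := by
  simp [dualSpace, Submodule.mem_iInf, LinearMap.mem_ker, applyAt]

lemma applyAt_eq' {n : ℕ} (Λ : (Fin n →₀ ℕ) →₀ ℝ) (g : MvPolynomial (Fin n) ℝ) :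
    applyAt (0 : Fin n → ℝ) Λ g = ∑ α ∈ g.support, Λ α * coeff α g := by
  rw [applyAt_eq]
  have h1 : ∑ α ∈ Λ.support, Λ α * coeff α g
      = ∑ α ∈ Λ.support ∪ g.support, Λ α * coeff α g :=
    Finset.sum_subset Finset.subset_union_left
      (fun x _ hx => by rw [Finsupp.notMem_support_iff.mp hx, zero_mul])
  have h2 : ∑ α ∈ g.support, Λ α * coeff α g
      = ∑ α ∈ Λ.support ∪ g.support, Λ α * coeff α g :=
    Finset.sum_subset Finset.subset_union_right
      (fun x _ hx => by rw [MvPolynomial.notMem_support_iff.mp hx, mul_zero])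
  rw [h1, h2]

lemma le_multideg {n : ℕ} (α : Fin n →₀ ℕ) (i : Fin n) : α i ≤ multideg α := by
  by_cases h : α i = 0
  · simp [h]
  · exact Finset.single_le_sum (fun j _ => Nat.zero_le _)
      (Finsupp.mem_support_iff.mpr h)

noncomputable def funcToFinsupp {n : ℕ} (N : ℕ)
    (φ : MvPolynomial (Fin n) ℝ →ₗ[ℝ] ℝ)
    (hφ : ∀ α : Fin n →₀ ℕ, N ≤ multideg α → φ (monomial α 1) = 0) :
    (Fin n →₀ ℕ) →₀ ℝ :=
  Finsupp.onFinset (Finset.Iic (Finsupp.equivFunOnFinite.symm (fun _ => N)))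
    (fun α => φ (monomial α 1))
    (fun α hne => by
      rw [Finset.mem_Iic]
      by_contra hle
      have : ∃ i, ¬ α i ≤ N := by
        by_contra hc
        push_neg at hc
        exact hle (Finsupp.le_def.mpr (fun i => by simpa using hc i))
      obtain ⟨i, hi⟩ := this
      exact hne (hφ α (le_trans (Nat.le_of_lt (not_le.mp hi)) (le_multideg α i))))

lemma funcToFinsupp_apply {n : ℕ} (N : ℕ) (φ : MvPolynomial (Fin n) ℝ →ₗ[ℝ] ℝ)
    (hφ : ∀ α, N ≤ multideg α → φ (monomial α 1) = 0) (α : Fin n →₀ ℕ) :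
    funcToFinsupp N φ hφ α = φ (monomial α 1) := Finsupp.onFinset_apply

lemma funcToFinsupp_mem {n : ℕ} {Q : Ideal (MvPolynomial (Fin n) ℝ)} (N : ℕ)
    (φ : MvPolynomial (Fin n) ℝ →ₗ[ℝ] ℝ)
    (hφ : ∀ α, N ≤ multideg α → φ (monomial α 1) = 0)
    (hQ : ∀ p ∈ Q, φ p = 0) :
    funcToFinsupp N φ hφ ∈ dualSpace (0 : Fin n → ℝ) Q := by
  rw [mem_dualSpace]
  intro p hp
  rw [applyAt_eq']
  have : ∀ α ∈ p.support, funcToFinsupp N φ hφ α * coeff α p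
      = φ (coeff α p • monomial α 1) := by
    intro α _
    rw [funcToFinsupp_apply, map_smul, smul_eq_mul, mul_comm]
  rw [Finset.sum_congr rfl this, ← map_sum]
  have hps : (∑ α ∈ p.support, coeff α p • monomial α (1:ℝ)) = p := by
    conv_rhs => rw [MvPolynomial.as_sum p]
    exact Finset.sum_congr rfl fun α _ => by rw [smul_monomial, smul_eq_mul, mul_one]
  rw [hps]
  exact hQ p hp

end Aux

/-- given a monomial basis `B = (x^{β₁},…,x^{β_μ})` of `R/Q₀`, the
remaining exponents `γ₁,…,γ_{s−μ}` of `supp 𝒟₀`, and the normal forms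
`x^{γ_j} ≡ Σ_i λ_{ij} x^{β_i} mod Q₀`, the elements
`Λ_i = d^{β_i} + Σ_j λ_{ij} d^{γ_j}` form a basis of `𝒟₀`, and the normal form
of any `g` is `NF(g) = Σ_i Λ_i^0[g]·x^{β_i}`. -/
theorem stmt4 {n s μ m : ℕ} (f : Fin s → MvPolynomial (Fin n) ℝ)
    (Q : Ideal (MvPolynomial (Fin n) ℝ))
    (hQ : IsPrimaryComponentAt (0 : Fin n → ℝ) (Ideal.span (Set.range f)) Q)
    (β : Fin μ → (Fin n →₀ ℕ)) (γ : Fin m → (Fin n →₀ ℕ))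
    (hinj : Function.Injective (Sum.elim β γ))
    (hsupp : Set.range (Sum.elim β γ) = dsupp Q)
    (hBli : LinearIndependent ℝ (fun i =>
      Ideal.Quotient.mk Q (MvPolynomial.monomial (β i) (1 : ℝ))))
    (hBsp : Submodule.span ℝ (Set.range fun i =>
      Ideal.Quotient.mk Q (MvPolynomial.monomial (β i) (1 : ℝ))) = ⊤)
    (lam : Fin μ → Fin m → ℝ)
    (hnf : ∀ j, (MvPolynomial.monomial (γ j) (1 : ℝ)
      - ∑ i, lam i j • MvPolynomial.monomial (β i) (1 : ℝ)) ∈ Q)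
    (Λ : Fin μ → ((Fin n →₀ ℕ) →₀ ℝ))
    (hΛ : ∀ i, Λ i = Finsupp.single (β i) (1 : ℝ)
      + ∑ j, lam i j • Finsupp.single (γ j) (1 : ℝ)) :
    (∀ i, Λ i ∈ dualSpace (0 : Fin n → ℝ) Q) ∧
    LinearIndependent ℝ Λ ∧
    Submodule.span ℝ (Set.range Λ) = dualSpace (0 : Fin n → ℝ) Q ∧
    (∀ g : MvPolynomial (Fin n) ℝ,
      (g - ∑ i, applyAt (0 : Fin n → ℝ) (Λ i) g •
        MvPolynomial.monomial (β i) (1 : ℝ)) ∈ Q) := by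
  classical
  obtain ⟨hprim, hrad, -⟩ := hQ
  obtain ⟨N, hN⟩ := exists_bound Q hrad
  -- injectivity facts
  have hβinj : Function.Injective β := fun a b h => by
    have := hinj (show Sum.elim β γ (Sum.inl a) = Sum.elim β γ (Sum.inl b) from h)
    simpa using this
  have hγinj : Function.Injective γ := fun a b h => by
    have := hinj (show Sum.elim β γ (Sum.inr a) = Sum.elim β γ (Sum.inr b) from h)
    simpa using this
  have hβγ : ∀ k j, β k ≠ γ j := fun k j h => by
    have := hinj (show Sum.elim β γ (Sum.inl k) = Sum.elim β γ (Sum.inr j) from h)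
    simp at this
  -- values of Λ i
  have hΛβ : ∀ i k, Λ i (β k) = if i = k then 1 else 0 := by
    intro i k
    rw [hΛ i]
    rw [Finsupp.add_apply, Finset.sum_apply']
    have h1 : (Finsupp.single (β i) (1:ℝ)) (β k) = if i = k then 1 else 0 := by
      rw [Finsupp.single_apply]
      by_cases h : i = k
      · simp [h]
      · rw [if_neg (fun e => h (hβinj e)), if_neg h]
    have h2 : ∀ j, (lam i j • Finsupp.single (γ j) (1:ℝ)) (β k) = 0 := by
      intro j
      rw [Finsupp.smul_apply, Finsupp.single_apply, if_neg (Ne.symm (hβγ k j))]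
      simp
    rw [h1, Finset.sum_congr rfl (fun j _ => h2 j), Finset.sum_const_zero, add_zero]
  have hΛγ : ∀ i j, Λ i (γ j) = lam i j := by
    intro i j
    rw [hΛ i]
    rw [Finsupp.add_apply, Finset.sum_apply']
    rw [Finsupp.single_apply, if_neg (hβγ i j)]
    rw [Finset.sum_eq_single j]
    · simp
    · intro b _ hb
      rw [Finsupp.smul_apply, Finsupp.single_apply, if_neg (fun e => hb (hγinj e))]
      simp
    · intro h; exact absurd (Finset.mem_univ j) h
  have hΛout : ∀ i α, α ∉ Set.range (Sum.elim β γ) → Λ i α = 0 := by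
    intro i α hα
    have hb : ∀ k, β k ≠ α := fun k e => hα ⟨Sum.inl k, e⟩
    have hg : ∀ j, γ j ≠ α := fun j e => hα ⟨Sum.inr j, e⟩
    rw [hΛ i, Finsupp.add_apply, Finset.sum_apply']
    rw [Finsupp.single_apply, if_neg (hb i)]
    rw [Finset.sum_eq_zero, add_zero]
    intro j _
    rw [Finsupp.smul_apply, Finsupp.single_apply, if_neg (hg j)]
    simp
  -- the basis of the quotient
  let b : Module.Basis (Fin μ) ℝ (MvPolynomial (Fin n) ℝ ⧸ Q) :=
    Module.Basis.mk hBli (le_of_eq hBsp.symm)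
  have hb : ∀ k, b k = Ideal.Quotient.mk Q (monomial (β k) (1:ℝ)) := fun k =>
    Module.Basis.mk_apply hBli (le_of_eq hBsp.symm) k
  let mkL : MvPolynomial (Fin n) ℝ →ₗ[ℝ] (MvPolynomial (Fin n) ℝ ⧸ Q) :=
    (Ideal.Quotient.mkₐ ℝ Q).toLinearMap
  let ψ : Fin μ → (MvPolynomial (Fin n) ℝ →ₗ[ℝ] ℝ) := fun i => (b.coord i).comp mkL
  have hψ : ∀ i p, ψ i p = b.coord i (Ideal.Quotient.mk Q p) := fun i p => rfl
  have hψQ : ∀ i, ∀ p ∈ Q, ψ i p = 0 := by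
    intro i p hp
    rw [hψ, Ideal.Quotient.eq_zero_iff_mem.mpr hp, map_zero]
  have hψβ : ∀ i k, ψ i (monomial (β k) 1) = if i = k then 1 else 0 := by
    intro i k
    rw [hψ, ← hb, Module.Basis.coord_apply, b.repr_self, Finsupp.single_apply]
    by_cases h : i = k
    · simp [h]
    · rw [if_neg (Ne.symm h), if_neg h]
  have hψγ : ∀ i j, ψ i (monomial (γ j) 1) = lam i j := by
    intro i j
    have h0 := hψQ i _ (hnf j)
    rw [map_sub, map_sum, sub_eq_zero] at h0
    rw [h0]
    rw [Finset.sum_eq_single i]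
    · rw [map_smul, hψβ, if_pos rfl, smul_eq_mul, mul_one]
    · intro k _ hk
      rw [map_smul, hψβ, if_neg (Ne.symm hk), smul_zero]
    · intro h; exact absurd (Finset.mem_univ i) h
  have hψhigh : ∀ i, ∀ α : Fin n →₀ ℕ, N ≤ multideg α → ψ i (monomial α 1) = 0 :=
    fun i α hα => hψQ i _ (hN α hα)
  -- the dual-space elements L i and their identification with Λ i
  have hLmem : ∀ i, funcToFinsupp N (ψ i) (hψhigh i) ∈ dualSpace (0 : Fin n → ℝ) Q :=
    fun i => funcToFinsupp_mem N (ψ i) (hψhigh i) (hψQ i)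
  have hLΛ : ∀ i, funcToFinsupp N (ψ i) (hψhigh i) = Λ i := by
    intro i
    ext α
    rw [funcToFinsupp_apply]
    by_cases hα : α ∈ Set.range (Sum.elim β γ)
    · obtain ⟨kj, rfl⟩ := hα
      cases kj with
      | inl k =>
        have : Sum.elim β γ (Sum.inl k) = β k := rfl
        rw [this, hψβ, hΛβ]
      | inr j =>
        have : Sum.elim β γ (Sum.inr j) = γ j := rfl
        rw [this, hψγ, hΛγ]
    · rw [hΛout i α hα]
      by_contra hne
      have : α ∈ dsupp Q := ⟨funcToFinsupp N (ψ i) (hψhigh i), hLmem i,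
        by rwa [funcToFinsupp_apply]⟩
      rw [← hsupp] at this
      exact hα this
  have part1 : ∀ i, Λ i ∈ dualSpace (0 : Fin n → ℝ) Q :=
    fun i => hLΛ i ▸ hLmem i
  -- linear independence
  have part2 : LinearIndependent ℝ Λ := by
    rw [Fintype.linearIndependent_iff]
    intro c hc k
    have h := congrArg (fun F : (Fin n →₀ ℕ) →₀ ℝ => F (β k)) hc
    simp only [Finset.sum_apply', Finsupp.smul_apply, Finsupp.coe_zero, Pi.zero_apply] at h
    rw [Finset.sum_congr rfl (fun i _ => by rw [hΛβ i k])] at h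
    simpa using h
  -- span
  have part3 : Submodule.span ℝ (Set.range Λ) = dualSpace (0 : Fin n → ℝ) Q := by
    apply le_antisymm
    · rw [Submodule.span_le]
      rintro _ ⟨i, rfl⟩
      exact part1 i
    · intro Λ' hΛ'
      have key : Λ' = ∑ i, Λ' (β i) • Λ i := by
        ext α
        rw [Finset.sum_apply']
        by_cases hα : α ∈ Set.range (Sum.elim β γ)
        · obtain ⟨kj, rfl⟩ := hα
          cases kj with
          | inl k =>
            have hek : Sum.elim β γ (Sum.inl k) = β k := rfl
            rw [hek]
            rw [Finset.sum_eq_single k]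
            · rw [Finsupp.smul_apply, hΛβ, if_pos rfl, smul_eq_mul, mul_one]
            · intro i _ hi
              rw [Finsupp.smul_apply, hΛβ, if_neg hi, smul_zero]
            · intro h; exact absurd (Finset.mem_univ k) h
          | inr j =>
            have hej : Sum.elim β γ (Sum.inr j) = γ j := rfl
            rw [hej]
            have h0 := mem_dualSpace.mp hΛ' _ (hnf j)
            rw [applyAt_g_sub, applyAt_g_sum, applyAt_monomial, mul_one, sub_eq_zero] at h0
            rw [h0]
            apply Finset.sum_congr rfl
            intro i _
            rw [applyAt_g_smul, applyAt_monomial, mul_one, Finsupp.smul_apply, hΛγ,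
              smul_eq_mul, mul_comm]
        · have hz : Λ' α = 0 := by
            by_contra hne
            exact hα (hsupp ▸ (⟨Λ', hΛ', hne⟩ : α ∈ dsupp Q))
          rw [hz]
          symm
          apply Finset.sum_eq_zero
          intro i _
          rw [Finsupp.smul_apply, hΛout i α hα, smul_zero]
      rw [key]
      exact Submodule.sum_mem _
        (fun i _ => Submodule.smul_mem _ _ (Submodule.subset_span ⟨i, rfl⟩))
  refine ⟨part1, part2, part3, ?_⟩
  -- normal form
  intro g
  have hg : Ideal.Quotient.mk Q g ∈ Submodule.span ℝ (Set.range fun i =>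
      Ideal.Quotient.mk Q (monomial (β i) (1:ℝ))) := by
    rw [hBsp]; exact Submodule.mem_top
  rw [Submodule.mem_span_range_iff_exists_fun] at hg
  obtain ⟨c, hc⟩ := hg
  have hq : g - ∑ k, c k • monomial (β k) (1:ℝ) ∈ Q := by
    have : Ideal.Quotient.mk Q (∑ k, c k • monomial (β k) (1:ℝ))
        = Ideal.Quotient.mk Q g := by
      rw [map_sum]
      have hsm : ∀ k : Fin μ, Ideal.Quotient.mk Q (c k • monomial (β k) (1:ℝ))
          = c k • Ideal.Quotient.mk Q (monomial (β k) (1:ℝ)) := fun k => by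
        rw [← Ideal.Quotient.mkₐ_eq_mk ℝ Q]
        exact map_smul _ _ _
      rw [Finset.sum_congr rfl (fun k _ => hsm k)]
      exact hc
    have h2 := (Ideal.Quotient.eq (I := Q)).mp this.symm
    exact h2
  have hval : ∀ i, applyAt (0 : Fin n → ℝ) (Λ i) g = c i := by
    intro i
    have h0 := mem_dualSpace.mp (part1 i) _ hq
    rw [applyAt_g_sub, sub_eq_zero] at h0
    rw [h0, applyAt_g_sum]
    rw [Finset.sum_eq_single i]
    · rw [applyAt_g_smul, applyAt_monomial, hΛβ, if_pos rfl, mul_one, mul_one]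
    · intro k _ hk
      rw [applyAt_g_smul, applyAt_monomial, hΛβ, if_neg (Ne.symm hk), zero_mul, mul_zero]
    · intro h; exact absurd (Finset.mem_univ i) h
  have : (∑ i, applyAt (0 : Fin n → ℝ) (Λ i) g • monomial (β i) (1:ℝ))
      = ∑ i, c i • monomial (β i) (1:ℝ) :=
    Finset.sum_congr rfl (fun i _ => by rw [hval i])
  rw [this]
  exact hq
end

section
/- Let (Λ₁,…,Λ_s) be a basis of 𝒟_{t−1}, the subspace of 𝒟_ζ of elements of degree at most t−1. An element Λ ∈ ℝ[∂] with no constant term lies in 𝒟_t if and only if it is of the form Λ(∂) = Σ_{i=1}^{s} Σ_{k=1}^{n} λ_{ik} ∫_k Λ_i(∂₁,…,∂_k,0,…,0) for scalars λ_{ik} ∈ ℝ, and the following two conditions hold: (i) Σ_{i=1}^{s} λ_{ik} ∂Λ_i/∂∂_l − Σ_{i=1}^{s} λ_{il} ∂Λ_i/∂∂_k = 0 for all 1 ≤ k ≤ l ≤ n; (ii) Λ^ζ[f_k] = 0 for every equation f_k of the system. -/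
open MvPolynomial

section Helpers
variable {n : ℕ}

lemma multideg_add (α β : Fin n →₀ ℕ) : multideg (α + β) = multideg α + multideg β := by
  classical
  unfold multideg
  exact Finsupp.sum_add_index' (fun _ => rfl) (fun _ _ _ => rfl)

lemma multideg_single (k : Fin n) (c : ℕ) : multideg (Finsupp.single k c) = c := by
  unfold multideg
  simp [Finsupp.sum_single_index]

lemma coeff_nderiv (α β : Fin n →₀ ℕ) (g : MvPolynomial (Fin n) ℝ) :
    coeff β (nderiv α g) =
      ((∏ i, ((β + α) i).choose (α i) : ℕ) : ℝ) * coeff (β + α) g := by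
  classical
  have key : ∀ γ : Fin n →₀ ℕ, γ ≠ β + α → γ - α = β →
      ((∏ i, (γ i).choose (α i) : ℕ) : ℝ) = 0 := by
    intro γ hne hsub
    have : ∃ i, γ i < α i := by
      by_contra hc
      push_neg at hc
      apply hne
      ext i
      have := congrArg (fun f => f i + α i) hsub
      simp only [Finsupp.tsub_apply, Finsupp.add_apply] at this ⊢
      have h2 := hc i
      omega
    obtain ⟨i, hi⟩ := this
    have : (∏ i, (γ i).choose (α i) : ℕ) = 0 :=
      Finset.prod_eq_zero (Finset.mem_univ i) (Nat.choose_eq_zero_of_lt hi)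
    rw [this]; simp
  unfold nderiv
  rw [coeff_sum]
  by_cases hmem : β + α ∈ g.support
  · rw [Finset.sum_eq_single (β + α)]
    · rw [coeff_monomial, if_pos (by rw [add_tsub_cancel_right])]
    · intro γ hγ hne
      rw [coeff_monomial]
      split_ifs with h
      · rw [key γ hne h, zero_mul]
      · rfl
    · intro h; exact absurd hmem h
  · rw [Finset.sum_eq_zero, MvPolynomial.notMem_support_iff.mp hmem, mul_zero]
    intro γ hγ
    rw [coeff_monomial]
    split_ifs with h
    · rw [key γ (fun he => hmem (he ▸ hγ)) h, zero_mul]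
    · rfl

end Helpers

section Helpers2
variable {n : ℕ}

lemma nderiv_add (α : Fin n →₀ ℕ) (g h : MvPolynomial (Fin n) ℝ) :
    nderiv α (g + h) = nderiv α g + nderiv α h := by
  ext β; simp [coeff_nderiv, coeff_add, mul_add]

lemma nderiv_smul (α : Fin n →₀ ℕ) (c : ℝ) (g : MvPolynomial (Fin n) ℝ) :
    nderiv α (c • g) = c • nderiv α g := by
  ext β; simp [coeff_nderiv, coeff_smul]; ring

lemma nderiv_zero (α : Fin n →₀ ℕ) : nderiv α (0 : MvPolynomial (Fin n) ℝ) = 0 := by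
  ext β; simp [coeff_nderiv]

/-- `applyAt` bundled as a linear map in the polynomial argument. -/
noncomputable def applyAtR (ζ : Fin n → ℝ) (Λ : (Fin n →₀ ℕ) →₀ ℝ) :
    MvPolynomial (Fin n) ℝ →ₗ[ℝ] ℝ where
  toFun g := applyAt ζ Λ g
  map_add' g h := by
    unfold applyAt applyAtL
    simp only [Finsupp.linearCombination_apply]
    rw [← Finsupp.sum_add]
    apply Finsupp.sum_congr
    intro α _
    simp [nderiv_add, smul_eq_mul, mul_add]
  map_smul' c g := by
    unfold applyAt applyAtL
    simp only [Finsupp.linearCombination_apply, RingHom.id_apply]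
    rw [Finsupp.smul_sum]
    apply Finsupp.sum_congr
    intro α _
    simp [nderiv_smul, smul_eq_mul]
    ring

lemma applyAtR_apply (ζ : Fin n → ℝ) (Λ : (Fin n →₀ ℕ) →₀ ℝ) (g : MvPolynomial (Fin n) ℝ) :
    applyAtR ζ Λ g = applyAt ζ Λ g := rfl

lemma applyAt_C_mul (ζ : Fin n → ℝ) (Λ : (Fin n →₀ ℕ) →₀ ℝ) (c : ℝ)
    (g : MvPolynomial (Fin n) ℝ) :
    applyAt ζ Λ (C c * g) = c * applyAt ζ Λ g := by
  have : C c * g = c • g := by rw [smul_eq_C_mul]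
  rw [this, ← applyAtR_apply, map_smul, applyAtR_apply, smul_eq_mul]

lemma dshift_apply (k : Fin n) (Λ : (Fin n →₀ ℕ) →₀ ℝ) (β : Fin n →₀ ℕ) :
    dshift k Λ β = Λ (β + Finsupp.single k 1) := rfl

lemma dshift_add (k : Fin n) (Λ Φ : (Fin n →₀ ℕ) →₀ ℝ) :
    dshift k (Λ + Φ) = dshift k Λ + dshift k Φ := by
  ext β; simp [dshift_apply]

lemma dshift_smul (k : Fin n) (c : ℝ) (Λ : (Fin n →₀ ℕ) →₀ ℝ) :
    dshift k (c • Λ) = c • dshift k Λ := by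
  ext β; simp [dshift_apply]

lemma dshift_zero (k : Fin n) : dshift k (0 : (Fin n →₀ ℕ) →₀ ℝ) = 0 := by
  ext β; simp [dshift_apply]

lemma dshift_comm (k l : Fin n) (Λ : (Fin n →₀ ℕ) →₀ ℝ) :
    dshift k (dshift l Λ) = dshift l (dshift k Λ) := by
  ext β; simp [dshift_apply, add_assoc, add_comm (Finsupp.single k 1)]

lemma dshift_sum {ι : Type*} (ss : Finset ι) (k : Fin n) (v : ι → ((Fin n →₀ ℕ) →₀ ℝ)) :
    dshift k (∑ i ∈ ss, v i) = ∑ i ∈ ss, dshift k (v i) := by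
  ext β
  rw [dshift_apply, Finsupp.finset_sum_apply, Finsupp.finset_sum_apply]
  exact Finset.sum_congr rfl fun i _ => rfl

lemma dshift_single (k : Fin n) (α : Fin n →₀ ℕ) (c : ℝ) :
    dshift k (Finsupp.single α c) =
      if α k = 0 then 0 else Finsupp.single (α - Finsupp.single k 1) c := by
  classical
  ext β
  rw [dshift_apply]
  split_ifs with h
  · rw [Finsupp.single_apply, if_neg, Finsupp.coe_zero, Pi.zero_apply]
    intro he
    have := congrArg (fun f => f k) he
    simp at this
    omega
  · have hle : Finsupp.single k 1 ≤ α := Finsupp.single_le_iff.mpr (by omega)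
    have hiff : (α = β + Finsupp.single k 1) ↔ (α - Finsupp.single k 1 = β) := by
      constructor <;> intro he
      · subst he; rw [add_tsub_cancel_right]
      · rw [← he, tsub_add_cancel_of_le hle]
    rw [Finsupp.single_apply, Finsupp.single_apply, if_congr hiff rfl rfl]

lemma intk_trunck_apply (k : Fin n) (Φ : (Fin n →₀ ℕ) →₀ ℝ) (α : Fin n →₀ ℕ) :
    intk k (trunck k Φ) α =
      if α k ≠ 0 ∧ ∀ j, k < j → α j = 0 then Φ (α - Finsupp.single k 1) else 0 := by
  classical
  by_cases h1 : α k = 0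
  · rw [if_neg (by tauto)]
    apply Finsupp.mapDomain_notin_range
    rintro ⟨β, rfl⟩
    simp at h1
  · have hle : Finsupp.single k 1 ≤ α := Finsupp.single_le_iff.mpr (by omega)
    have hα : (α - Finsupp.single k 1) + Finsupp.single k 1 = α := tsub_add_cancel_of_le hle
    have L : intk k (trunck k Φ) α = trunck k Φ (α - Finsupp.single k 1) := by
      conv_lhs => rw [← hα]
      exact Finsupp.mapDomain_apply (fun a b h => add_right_cancel h) _ _
    rw [L]
    unfold trunck
    rw [Finsupp.filter_apply]
    by_cases h2 : ∀ j, k < j → α j = 0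
    · rw [if_pos, if_pos ⟨h1, h2⟩]
      intro j hj
      rw [Finsupp.tsub_apply, Finsupp.single_apply, if_neg (ne_of_lt hj)]
      have := h2 j hj
      omega
    · rw [if_neg, if_neg (by tauto)]
      intro hcon
      apply h2
      intro j hj
      have := hcon j hj
      rw [Finsupp.tsub_apply, Finsupp.single_apply, if_neg (ne_of_lt hj)] at this
      omega

end Helpers2

section Helpers3
variable {n : ℕ}

lemma exists_unique_maxk (α : Fin n →₀ ℕ) (hα : α ≠ 0) :
    ∃! k : Fin n, α k ≠ 0 ∧ ∀ j, k < j → α j = 0 := by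
  have hne : α.support.Nonempty := Finsupp.support_nonempty_iff.mpr hα
  refine ⟨α.support.max' hne, ⟨?_, ?_⟩, ?_⟩
  · exact Finsupp.mem_support_iff.mp (α.support.max'_mem hne)
  · intro j hj
    by_contra hc
    exact absurd (α.support.le_max' j (Finsupp.mem_support_iff.mpr hc)) (not_le.mpr hj)
  · rintro k ⟨hk1, hk2⟩
    refine le_antisymm (α.support.le_max' k (Finsupp.mem_support_iff.mpr hk1)) ?_
    by_contra hc
    push_neg at hc
    exact Finsupp.mem_support_iff.mp (α.support.max'_mem hne) (hk2 _ hc)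

lemma sum_intk_trunck_apply (Cc : Fin n → ((Fin n →₀ ℕ) →₀ ℝ)) (α : Fin n →₀ ℕ) (k₀ : Fin n)
    (hk₀ : α k₀ ≠ 0 ∧ ∀ j, k₀ < j → α j = 0)
    (huniq : ∀ k, (α k ≠ 0 ∧ ∀ j, k < j → α j = 0) → k = k₀) :
    (∑ k, intk k (trunck k (Cc k))) α = Cc k₀ (α - Finsupp.single k₀ 1) := by
  classical
  rw [Finsupp.finset_sum_apply]
  rw [Finset.sum_eq_single k₀]
  · rw [intk_trunck_apply, if_pos hk₀]
  · intro k _ hne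
    rw [intk_trunck_apply, if_neg (fun h => hne (huniq k h))]
  · intro h; exact absurd (Finset.mem_univ k₀) h

lemma sum_intk_trunck_apply_zero (Cc : Fin n → ((Fin n →₀ ℕ) →₀ ℝ)) :
    (∑ k, intk k (trunck k (Cc k))) 0 = 0 := by
  rw [Finsupp.finset_sum_apply]
  apply Finset.sum_eq_zero
  intro k _
  rw [intk_trunck_apply, if_neg]
  rintro ⟨h1, -⟩
  exact h1 rfl

lemma recon (Λ : (Fin n →₀ ℕ) →₀ ℝ) (h0 : Λ 0 = 0) :
    ∑ k, intk k (trunck k (dshift k Λ)) = Λ := by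
  ext α
  by_cases hα : α = 0
  · subst hα
    rw [sum_intk_trunck_apply_zero, h0]
  · obtain ⟨k₀, hk₀, huniq⟩ := exists_unique_maxk α hα
    rw [sum_intk_trunck_apply _ _ _ hk₀ huniq, dshift_apply,
      tsub_add_cancel_of_le (Finsupp.single_le_iff.mpr (by omega : 1 ≤ α k₀))]

lemma key_dshift (Cc : Fin n → ((Fin n →₀ ℕ) →₀ ℝ))
    (hcomm : ∀ k l, dshift l (Cc k) = dshift k (Cc l)) (l : Fin n) :
    dshift l (∑ k, intk k (trunck k (Cc k))) = Cc l := by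
  ext β
  rw [dshift_apply]
  set α := β + Finsupp.single l 1 with hαdef
  have hαl : α l ≠ 0 := by simp [hαdef]
  obtain ⟨k₀, hk₀, huniq⟩ := exists_unique_maxk α (fun h => hαl (by rw [h]; rfl))
  rw [sum_intk_trunck_apply _ _ _ hk₀ huniq]
  rcases eq_or_ne k₀ l with rfl | hne
  · rw [hαdef, add_tsub_cancel_right]
  · have hlk : l < k₀ := by
      rcases lt_or_gt_of_ne hne with h | h
      · exact absurd (hk₀.2 l h) hαl
      · exact h
    have hβk : β k₀ ≠ 0 := by
      have h1 := hk₀.1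
      rw [hαdef, Finsupp.add_apply, Finsupp.single_apply, if_neg (ne_of_lt hlk)] at h1
      omega
    have hle : Finsupp.single k₀ 1 ≤ β := Finsupp.single_le_iff.mpr (by omega)
    have hrw : α - Finsupp.single k₀ 1 = (β - Finsupp.single k₀ 1) + Finsupp.single l 1 := by
      ext j
      rw [hαdef]
      simp only [Finsupp.tsub_apply, Finsupp.add_apply, Finsupp.single_apply]
      rcases eq_or_ne k₀ j with rfl | hj
      · rw [if_neg (ne_of_lt hlk), if_pos rfl]
        omega
      · rw [if_neg hj]
        split_ifs with h <;> omega
    rw [hrw, ← dshift_apply l, hcomm k₀ l, dshift_apply, tsub_add_cancel_of_le hle]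

lemma intk_trunck_smul (k : Fin n) (c : ℝ) (Φ : (Fin n →₀ ℕ) →₀ ℝ) :
    intk k (trunck k (c • Φ)) = c • intk k (trunck k Φ) := by
  ext α
  rw [Finsupp.smul_apply, intk_trunck_apply, intk_trunck_apply]
  split_ifs with h
  · rw [Finsupp.smul_apply]
  · rw [smul_zero]

lemma intk_trunck_sum {ι : Type*} (ss : Finset ι) (k : Fin n)
    (v : ι → ((Fin n →₀ ℕ) →₀ ℝ)) :
    intk k (trunck k (∑ i ∈ ss, v i)) = ∑ i ∈ ss, intk k (trunck k (v i)) := by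
  ext α
  rw [intk_trunck_apply, Finsupp.finset_sum_apply, Finsupp.finset_sum_apply,
    Finset.sum_congr rfl (fun i _ => intk_trunck_apply k (v i) α)]
  split_ifs with h
  · rfl
  · rw [Finset.sum_const_zero]

end Helpers3

section Helpers4
variable {n : ℕ}

lemma add_sub_single_comm₁ {α β : Fin n →₀ ℕ} {k : Fin n} (h : α k ≠ 0) :
    β + (α - Finsupp.single k 1) = β + α - Finsupp.single k 1 := by
  ext j
  simp only [Finsupp.add_apply, Finsupp.tsub_apply, Finsupp.single_apply]
  rcases eq_or_ne k j with rfl | hj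
  · rw [if_pos rfl]; omega
  · rw [if_neg hj]; omega

lemma add_sub_single_comm₂ {α β : Fin n →₀ ℕ} {k : Fin n} (h : β k ≠ 0) :
    (β - Finsupp.single k 1) + α = β + α - Finsupp.single k 1 := by
  ext j
  simp only [Finsupp.add_apply, Finsupp.tsub_apply, Finsupp.single_apply]
  rcases eq_or_ne k j with rfl | hj
  · rw [if_pos rfl]; omega
  · rw [if_neg hj]; omega

lemma prod_choose_split (γ a : Fin n →₀ ℕ) (k : Fin n) :
    (∏ i, (γ i).choose (a i)) =
      (γ k).choose (a k) * ∏ i ∈ Finset.univ.erase k, (γ i).choose (a i) :=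
  (Finset.mul_prod_erase _ _ (Finset.mem_univ k)).symm

lemma nderiv_X_sub_C_mul (k : Fin n) (c : ℝ) (α : Fin n →₀ ℕ)
    (g : MvPolynomial (Fin n) ℝ) :
    nderiv α ((X k - C c) * g) =
      (X k - C c) * nderiv α g +
        (if α k = 0 then 0 else nderiv (α - Finsupp.single k 1) g) := by
  classical
  ext β
  have hXg : ∀ (γ : Fin n →₀ ℕ) (p : MvPolynomial (Fin n) ℝ),
      coeff γ (X k * p) = if γ k = 0 then 0 else coeff (γ - Finsupp.single k 1) p := by
    intro γ p
    rw [coeff_X_mul']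
    by_cases h : γ k = 0
    · rw [if_neg (by simp [Finsupp.mem_support_iff, h]), if_pos h]
    · rw [if_pos (by simp [Finsupp.mem_support_iff, h]), if_neg h]
  simp only [sub_mul, coeff_sub, coeff_add, coeff_C_mul, hXg, coeff_nderiv,
    apply_ite (coeff β), coeff_zero]
  have hoff : ∀ γ' a' : Fin n →₀ ℕ,
      (∀ i ∈ Finset.univ.erase k, (γ' i).choose (a' i) = ((β + α) i).choose (α i)) →
      (∏ i, (γ' i).choose (a' i)) =
        (γ' k).choose (a' k) * ∏ i ∈ Finset.univ.erase k, ((β + α) i).choose (α i) := by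
    intro γ' a' h
    rw [prod_choose_split γ' a' k, Finset.prod_congr rfl h]
  set P := ∏ i ∈ Finset.univ.erase k, ((β + α) i).choose (α i) with hP
  have hN0 : (∏ i, ((β + α) i).choose (α i)) = (β k + α k).choose (α k) * P := by
    have := hoff (β + α) α (fun i _ => rfl)
    rwa [Finsupp.add_apply] at this
  by_cases hβ : β k = 0 <;> by_cases hα : α k = 0
  · rw [if_pos (show (β + α) k = 0 by rw [Finsupp.add_apply]; omega), if_pos hβ, if_pos hα]
    ring
  · have hN2 : (∏ i, ((β + (α - Finsupp.single k 1) : Fin n →₀ ℕ) i).choose ((α - Finsupp.single k 1 : Fin n →₀ ℕ) i)) =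
        (β k + α k - 1).choose (α k - 1) * P := by
      have := hoff (β + (α - Finsupp.single k 1)) (α - Finsupp.single k 1) ?_
      · rwa [Finsupp.add_apply, Finsupp.tsub_apply, Finsupp.single_apply, if_pos rfl,
          show β k + (α k - 1) = β k + α k - 1 by omega] at this
      · intro i hi
        have hik : i ≠ k := (Finset.mem_erase.mp hi).1
        rw [Finsupp.add_apply, Finsupp.tsub_apply, Finsupp.single_apply, if_neg (Ne.symm hik),
          Nat.sub_zero, Finsupp.add_apply]
    rw [if_neg (show ¬ (β + α) k = 0 by rw [Finsupp.add_apply]; omega), if_pos hβ, if_neg hα,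
      hN2, add_sub_single_comm₁ hα, hN0, hβ]
    simp only [Nat.zero_add, Nat.choose_self,
      show 0 + α k - 1 = α k - 1 by omega, Nat.choose_self, one_mul]
    ring
  · have hN1 : (∏ i, (((β - Finsupp.single k 1) + α : Fin n →₀ ℕ) i).choose (α i)) =
        (β k + α k - 1).choose (α k) * P := by
      have := hoff ((β - Finsupp.single k 1) + α) α ?_
      · rwa [Finsupp.add_apply, Finsupp.tsub_apply, Finsupp.single_apply, if_pos rfl,
          show β k - 1 + α k = β k + α k - 1 by omega] at this
      · intro i hi
        have hik : i ≠ k := (Finset.mem_erase.mp hi).1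
        rw [Finsupp.add_apply, Finsupp.tsub_apply, Finsupp.single_apply, if_neg (Ne.symm hik),
          Nat.sub_zero, Finsupp.add_apply]
    rw [if_neg (show ¬ (β + α) k = 0 by rw [Finsupp.add_apply]; omega), if_neg hβ, if_pos hα,
      hN1, add_sub_single_comm₂ hβ, hN0, hα]
    simp only [Nat.choose_zero_right, one_mul]
    ring
  · have hN1 : (∏ i, (((β - Finsupp.single k 1) + α : Fin n →₀ ℕ) i).choose (α i)) =
        (β k + α k - 1).choose (α k) * P := by
      have := hoff ((β - Finsupp.single k 1) + α) α ?_
      · rwa [Finsupp.add_apply, Finsupp.tsub_apply, Finsupp.single_apply, if_pos rfl,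
          show β k - 1 + α k = β k + α k - 1 by omega] at this
      · intro i hi
        have hik : i ≠ k := (Finset.mem_erase.mp hi).1
        rw [Finsupp.add_apply, Finsupp.tsub_apply, Finsupp.single_apply, if_neg (Ne.symm hik),
          Nat.sub_zero, Finsupp.add_apply]
    have hN2 : (∏ i, ((β + (α - Finsupp.single k 1) : Fin n →₀ ℕ) i).choose ((α - Finsupp.single k 1 : Fin n →₀ ℕ) i)) =
        (β k + α k - 1).choose (α k - 1) * P := by
      have := hoff (β + (α - Finsupp.single k 1)) (α - Finsupp.single k 1) ?_
      · rwa [Finsupp.add_apply, Finsupp.tsub_apply, Finsupp.single_apply, if_pos rfl,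
          show β k + (α k - 1) = β k + α k - 1 by omega] at this
      · intro i hi
        have hik : i ≠ k := (Finset.mem_erase.mp hi).1
        rw [Finsupp.add_apply, Finsupp.tsub_apply, Finsupp.single_apply, if_neg (Ne.symm hik),
          Nat.sub_zero, Finsupp.add_apply]
    rw [if_neg (show ¬ (β + α) k = 0 by rw [Finsupp.add_apply]; omega), if_neg hβ, if_neg hα,
      hN1, hN2, add_sub_single_comm₁ hα, add_sub_single_comm₂ hβ, hN0]
    have hpascal : (β k + α k).choose (α k) =
        (β k + α k - 1).choose (α k) + (β k + α k - 1).choose (α k - 1) := by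
      obtain ⟨b, hb⟩ := Nat.exists_eq_succ_of_ne_zero hβ
      obtain ⟨a, ha⟩ := Nat.exists_eq_succ_of_ne_zero hα
      rw [hb, ha, show b + 1 + (a + 1) = b + a + 1 + 1 by omega]
      simp only [Nat.add_sub_cancel, Nat.succ_sub_one]
      rw [Nat.choose_succ_succ]
      omega
    rw [hpascal]
    push_cast
    ring

end Helpers4

section Helpers5
variable {n : ℕ}

lemma applyAt_single (ζ : Fin n → ℝ) (α : Fin n →₀ ℕ) (c : ℝ) (g : MvPolynomial (Fin n) ℝ) :
    applyAt ζ (Finsupp.single α c) g = c * eval ζ (nderiv α g) := by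
  unfold applyAt applyAtL
  rw [Finsupp.linearCombination_single, smul_eq_mul]

lemma applyAt_zero_left (ζ : Fin n → ℝ) (g : MvPolynomial (Fin n) ℝ) :
    applyAt ζ (0 : (Fin n →₀ ℕ) →₀ ℝ) g = 0 := by
  unfold applyAt; rw [map_zero]

lemma applyAt_add_left (ζ : Fin n → ℝ) (Λ Φ : (Fin n →₀ ℕ) →₀ ℝ) (g : MvPolynomial (Fin n) ℝ) :
    applyAt ζ (Λ + Φ) g = applyAt ζ Λ g + applyAt ζ Φ g := by
  unfold applyAt; rw [map_add]

lemma applyAt_dshift (ζ : Fin n → ℝ) (k : Fin n) (Λ : (Fin n →₀ ℕ) →₀ ℝ)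
    (g : MvPolynomial (Fin n) ℝ) :
    applyAt ζ (dshift k Λ) g = applyAt ζ Λ ((X k - C (ζ k)) * g) := by
  classical
  induction Λ using Finsupp.induction with
  | zero => rw [dshift_zero, applyAt_zero_left, applyAt_zero_left]
  | single_add α c Φ hα hc ih =>
    rw [dshift_add, applyAt_add_left, applyAt_add_left, ih, dshift_single, applyAt_single,
      nderiv_X_sub_C_mul]
    congr 1
    rw [map_add, map_mul, map_sub, eval_X, eval_C, sub_self, zero_mul, zero_add]
    split_ifs with h
    · rw [applyAt_zero_left, map_zero, mul_zero]
    · rw [applyAt_single]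

lemma mem_dualSpace_iff (ζ : Fin n → ℝ) (Q : Ideal (MvPolynomial (Fin n) ℝ))
    (Λ : (Fin n →₀ ℕ) →₀ ℝ) :
    Λ ∈ dualSpace ζ Q ↔ ∀ p ∈ Q, applyAt ζ Λ p = 0 := by
  unfold dualSpace applyAt
  simp [Submodule.mem_iInf, LinearMap.mem_ker]

lemma taylor_decomp (ζ : Fin n → ℝ) (h : MvPolynomial (Fin n) ℝ) :
    ∃ hk : Fin n → MvPolynomial (Fin n) ℝ,
      h = C (eval ζ h) + ∑ k, (X k - C (ζ k)) * hk k := by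
  classical
  induction h using MvPolynomial.induction_on with
  | C a => exact ⟨0, by simp⟩
  | add p q hp hq =>
    obtain ⟨pk, hp⟩ := hp
    obtain ⟨qk, hq⟩ := hq
    refine ⟨fun k => pk k + qk k, ?_⟩
    have hs : ∑ k, (X k - C (ζ k)) * (pk k + qk k)
        = (∑ k, (X k - C (ζ k)) * pk k) + ∑ k, (X k - C (ζ k)) * qk k := by
      rw [← Finset.sum_add_distrib]
      exact Finset.sum_congr rfl fun k _ => mul_add _ _ _
    rw [hs, map_add, map_add]
    conv_lhs => rw [hp, hq]
    ring
  | mul_X p i hp =>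
    obtain ⟨pk, hp⟩ := hp
    refine ⟨fun k => C (ζ i) * pk k + if k = i then p else 0, ?_⟩
    have hS : (∑ k, (X k - C (ζ k)) * (C (ζ i) * pk k + if k = i then p else 0))
        = C (ζ i) * (∑ k, (X k - C (ζ k)) * pk k) + (X i - C (ζ i)) * p := by
      have h1 : (∑ k, (X k - C (ζ k)) * (C (ζ i) * pk k + if k = i then p else 0))
          = ∑ k, (C (ζ i) * ((X k - C (ζ k)) * pk k)
              + if k = i then (X k - C (ζ k)) * p else 0) := by
        refine Finset.sum_congr rfl fun k _ => ?_
        split_ifs with h <;> ring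
      rw [h1, Finset.sum_add_distrib, ← Finset.mul_sum,
        Finset.sum_ite_eq' Finset.univ i (fun k => (X k - C (ζ k)) * p),
        if_pos (Finset.mem_univ i)]
    rw [hS, eval_mul, eval_X, map_mul]
    have hkey : C (ζ i) * p = C (eval ζ p) * C (ζ i) + C (ζ i) * ∑ k, (X k - C (ζ k)) * pk k := by
      conv_lhs => rw [hp]
      ring
    linear_combination hkey

lemma mem_maxIdealAt_iff (ζ : Fin n → ℝ) (p : MvPolynomial (Fin n) ℝ) :
    p ∈ maxIdealAt ζ ↔ eval ζ p = 0 := by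
  constructor
  · intro hp
    obtain ⟨c, hc⟩ := Ideal.mem_span_range_iff_exists_fun.mp hp
    rw [← hc, map_sum]
    apply Finset.sum_eq_zero
    intro i _
    rw [map_mul, map_sub, eval_X, eval_C, sub_self, mul_zero]
  · intro hp
    obtain ⟨hk, hrep⟩ := taylor_decomp ζ p
    rw [hrep, hp, map_zero, zero_add]
    apply Ideal.sum_mem
    intro k _
    exact Ideal.mul_mem_right _ _ (Ideal.subset_span ⟨k, rfl⟩)

lemma applyAt_mul_expand (ζ : Fin n → ℝ) (Λ : (Fin n →₀ ℕ) →₀ ℝ)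
    (h q : MvPolynomial (Fin n) ℝ) :
    ∃ hk : Fin n → MvPolynomial (Fin n) ℝ,
      applyAt ζ Λ (h * q) =
        eval ζ h * applyAt ζ Λ q + ∑ k, applyAt ζ (dshift k Λ) (hk k * q) := by
  obtain ⟨hk, hrep⟩ := taylor_decomp ζ h
  refine ⟨hk, ?_⟩
  conv_lhs => rw [hrep]
  rw [add_mul, Finset.sum_mul, ← applyAtR_apply, map_add, map_sum]
  congr 1
  · rw [applyAtR_apply, applyAt_C_mul]
  · apply Finset.sum_congr rfl
    intro k _
    rw [applyAtR_apply, mul_assoc, ← applyAt_dshift]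

end Helpers5

lemma mem_dualSpaceLE_iff {n : ℕ} (ζ : Fin n → ℝ) (Q : Ideal (MvPolynomial (Fin n) ℝ))
    (t : ℕ) (Λ : (Fin n →₀ ℕ) →₀ ℝ) :
    Λ ∈ dualSpaceLE ζ Q t ↔
      Λ ∈ dualSpace ζ Q ∧ ∀ α, ¬ multideg α ≤ t → Λ α = 0 := by
  unfold dualSpaceLE
  rw [Submodule.mem_inf, Finsupp.mem_supported']
  simp [Set.mem_setOf_eq]

/-- integration criterion: let `(Λ₁,…,Λ_s)` be a basis of
`𝒟_t` (elements of the dual space of degree at most `t`). An element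
`Λ ∈ ℝ[∂]` with no constant term lies in `𝒟_{t+1}` iff it has the form
`Λ = Σ_{i,k} λ_{ik} ∫_k Λ_i(∂₁,…,∂_k,0,…,0)` where
(i) `Σ_i λ_{ik} ∂Λ_i/∂∂_l − Σ_i λ_{il} ∂Λ_i/∂∂_k = 0` for all `k ≤ l` and
(ii) `Λ^ζ[f_j] = 0` for every equation `f_j`. -/
theorem stmt6 {n m s : ℕ} (f : Fin m → MvPolynomial (Fin n) ℝ) (ζ : Fin n → ℝ)
    (Q : Ideal (MvPolynomial (Fin n) ℝ))
    (hQ : IsPrimaryComponentAt ζ (Ideal.span (Set.range f)) Q)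
    (t : ℕ) (Λs : Fin s → ((Fin n →₀ ℕ) →₀ ℝ))
    (hli : LinearIndependent ℝ Λs)
    (hsp : Submodule.span ℝ (Set.range Λs) = dualSpaceLE ζ Q t)
    (Λ : (Fin n →₀ ℕ) →₀ ℝ) (hconst : Λ 0 = 0) :
    Λ ∈ dualSpaceLE ζ Q (t + 1) ↔
      ∃ lam : Fin s → Fin n → ℝ,
        Λ = ∑ i, ∑ k, lam i k • intk k (trunck k (Λs i)) ∧
        (∀ k l : Fin n, k ≤ l →
          (∑ i, lam i k • dshift l (Λs i)) = (∑ i, lam i l • dshift k (Λs i))) ∧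
        (∀ j, applyAt ζ Λ (f j) = 0) := by
  classical
  obtain ⟨hQprim, hrad, S, hS, hI⟩ := hQ
  have hIQ : Ideal.span (Set.range f) ≤ Q := hI ▸ inf_le_right
  have hfQ : ∀ j, f j ∈ Q := fun j => hIQ (Ideal.subset_span ⟨j, rfl⟩)
  constructor
  · intro h
    obtain ⟨hdual, hsuppdeg⟩ := (mem_dualSpaceLE_iff ζ Q (t + 1) Λ).mp h
    have hdW : ∀ k, dshift k Λ ∈ dualSpaceLE ζ Q t := by
      intro k
      rw [mem_dualSpaceLE_iff]
      constructor
      · rw [mem_dualSpace_iff]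
        intro p hp
        rw [applyAt_dshift]
        exact (mem_dualSpace_iff ζ Q Λ).mp hdual _ (Q.mul_mem_left _ hp)
      · intro β hβ
        rw [dshift_apply]
        apply hsuppdeg
        rw [multideg_add, multideg_single]
        omega
    have hmem : ∀ k, ∃ c : Fin s → ℝ, ∑ i, c i • Λs i = dshift k Λ := by
      intro k
      have hk := hdW k
      rw [← hsp] at hk
      exact (Submodule.mem_span_range_iff_exists_fun ℝ).mp hk
    choose cc hcc using hmem
    refine ⟨fun i k => cc k i, ?_, ?_, ?_⟩
    · rw [Finset.sum_comm]
      conv_lhs => rw [← recon Λ hconst]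
      apply Finset.sum_congr rfl
      intro k _
      rw [← hcc k, intk_trunck_sum]
      exact Finset.sum_congr rfl fun i _ => intk_trunck_smul k (cc k i) (Λs i)
    · intro k l hkl
      have hexp : ∀ a b : Fin n, dshift b (dshift a Λ) = ∑ i, cc a i • dshift b (Λs i) := by
        intro a b
        rw [← hcc a, dshift_sum]
        exact Finset.sum_congr rfl fun i _ => dshift_smul b (cc a i) (Λs i)
      rw [← hexp k l, ← hexp l k, dshift_comm]
    · intro j
      exact (mem_dualSpace_iff ζ Q Λ).mp hdual (f j) (hfQ j)
  · rintro ⟨lam, hrep, hcomm, hf⟩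
    set Cc : Fin n → ((Fin n →₀ ℕ) →₀ ℝ) := fun l => ∑ i, lam i l • Λs i with hCc
    have hCmem : ∀ l, Cc l ∈ dualSpaceLE ζ Q t := by
      intro l
      rw [← hsp]
      exact Submodule.sum_mem _ fun i _ =>
        Submodule.smul_mem _ _ (Submodule.subset_span ⟨i, rfl⟩)
    have hexp : ∀ a b : Fin n, dshift b (Cc a) = ∑ i, lam i a • dshift b (Λs i) := by
      intro a b
      rw [hCc, dshift_sum]
      exact Finset.sum_congr rfl fun i _ => dshift_smul b (lam i a) (Λs i)
    have hcomm' : ∀ k l, dshift l (Cc k) = dshift k (Cc l) := by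
      intro k l
      rcases le_total k l with hkl | hkl
      · rw [hexp k l, hexp l k]; exact hcomm k l hkl
      · rw [hexp k l, hexp l k]; exact (hcomm l k hkl).symm
    have hrep' : Λ = ∑ k, intk k (trunck k (Cc k)) := by
      rw [hrep, Finset.sum_comm]
      apply Finset.sum_congr rfl
      intro k _
      rw [hCc, intk_trunck_sum]
      exact Finset.sum_congr rfl fun i _ => (intk_trunck_smul k (lam i k) (Λs i)).symm
    have hdsh : ∀ l, dshift l Λ = Cc l := by
      intro l
      rw [hrep']
      exact key_dshift Cc hcomm' l
    have hsuppdeg : ∀ α, ¬ multideg α ≤ t + 1 → Λ α = 0 := by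
      intro α hα
      have hα0 : α ≠ 0 := by
        rintro rfl
        exact hα (by simp [multideg])
      obtain ⟨k₀, hk₀, huniq⟩ := exists_unique_maxk α hα0
      rw [hrep', sum_intk_trunck_apply Cc α k₀ hk₀ (fun k hk => huniq k hk)]
      apply ((mem_dualSpaceLE_iff ζ Q t (Cc k₀)).mp (hCmem k₀)).2
      intro hle
      apply hα
      have hsplit : α = (α - Finsupp.single k₀ 1) + Finsupp.single k₀ 1 :=
        (tsub_add_cancel_of_le (Finsupp.single_le_iff.mpr (by omega))).symm
      rw [hsplit, multideg_add, multideg_single]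
      omega
    have hdshQ : ∀ (k : Fin n) (p : MvPolynomial (Fin n) ℝ), p ∈ Q →
        applyAt ζ (dshift k Λ) p = 0 := by
      intro k p hp
      rw [hdsh k]
      exact (mem_dualSpace_iff ζ Q (Cc k)).mp
        ((mem_dualSpaceLE_iff ζ Q t (Cc k)).mp (hCmem k)).1 p hp
    have hvanI : ∀ p ∈ Ideal.span (Set.range f), applyAt ζ Λ p = 0 := by
      intro p hp
      obtain ⟨c, hc⟩ := Ideal.mem_span_range_iff_exists_fun.mp hp
      rw [← hc, ← applyAtR_apply, map_sum]
      apply Finset.sum_eq_zero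
      intro j _
      rw [applyAtR_apply]
      obtain ⟨hkf, hexpj⟩ := applyAt_mul_expand ζ Λ (c j) (f j)
      rw [hexpj, hf j, mul_zero, zero_add]
      exact Finset.sum_eq_zero fun k _ => hdshQ k _ (Ideal.mul_mem_left Q _ (hfQ j))
    have hg : ∃ g ∈ S.inf id, eval ζ g ≠ 0 := by
      have hPex : ∀ P ∈ S, ∃ g ∈ P, eval ζ g ≠ 0 := by
        intro P hPS
        obtain ⟨hprim, hnle⟩ := hS P hPS
        obtain ⟨x, hxrad, hxnot⟩ := SetLike.not_le_iff_exists.mp hnle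
        obtain ⟨N, hN⟩ := Ideal.mem_radical_iff.mp hxrad
        refine ⟨x ^ N, hN, ?_⟩
        rw [map_pow]
        apply pow_ne_zero
        intro h0
        exact hxnot ((mem_maxIdealAt_iff ζ x).mpr h0)
      choose gP hgPmem hgPne using hPex
      refine ⟨∏ P ∈ S.attach, gP P P.2, ?_, ?_⟩
      · rw [Submodule.mem_finsetInf]
        intro P hPmem
        have hfac : (∏ R ∈ S.attach, gP R R.2) =
            gP P hPmem * ∏ R ∈ S.attach.erase ⟨P, hPmem⟩, gP R R.2 :=
          (Finset.mul_prod_erase _ _ (Finset.mem_attach S ⟨P, hPmem⟩)).symm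
        show _ ∈ id P
        rw [id, hfac]
        exact Ideal.mul_mem_right _ _ (hgPmem P hPmem)
      · rw [map_prod]
        exact Finset.prod_ne_zero_iff.mpr fun R _ => hgPne _ _
    obtain ⟨g, hgmem, hgne⟩ := hg
    have hΛdual : Λ ∈ dualSpace ζ Q := by
      rw [mem_dualSpace_iff]
      intro q hq
      have hgq : g * q ∈ Ideal.span (Set.range f) := by
        rw [hI, Submodule.mem_inf]
        exact ⟨Ideal.mul_mem_right _ _ hgmem, Ideal.mul_mem_left _ _ hq⟩
      obtain ⟨hkg, hexpg⟩ := applyAt_mul_expand ζ Λ g q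
      have h0 : applyAt ζ Λ (g * q) = 0 := hvanI _ hgq
      rw [hexpg] at h0
      have h1 : ∑ k, applyAt ζ (dshift k Λ) (hkg k * q) = 0 :=
        Finset.sum_eq_zero fun k _ => hdshQ k _ (Ideal.mul_mem_left Q _ hq)
      rw [h1, add_zero] at h0
      exact (mul_eq_zero.mp h0).resolve_left hgne
    exact (mem_dualSpaceLE_iff ζ Q (t + 1) Λ).mpr ⟨hΛdual, hsuppdeg⟩
end
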